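/- arXiv:1708.01421 — 3 statements merged into one kernel-verified Lean document; each statement's English description precedes it below -/
import Mathlib

section
/- Let g, f be formal power series over ℚ with g(0) = 1, f(0) = 0 and with the coefficient of x^1 in f nonzero, and define the Sheffer triangle entries S(n,m) := n!·[x^n]( g(x)·f(x)^m / m! ) for integers n, m ≥ 0. Work in the ring (ℚ[[t]])[[y]] of formal power series in y over ℚ[[t]], and let X = x(t;y) be the element of (ℚ[[t]])[[y]] with zero constant term satisfying X − t·f(X) = y (the compositional inverse of y(t;x) = x − t·f(x)). Let H be the formal power series over ℚ with H(0) = 0 whose formal derivative is g. Then for all integers d ≥ 0 and m ≥ 0, the coefficient of t^m·y^{d+1} in H(x(t;y)) equals S(d+m, m)/(d+1)!. Equivalently, the e.g.f. Σ_{d≥0} GDS(d,t)·y^{d+1}/(d+1)! of the ordinary generating functions GDS(d,t) := Σ_{m≥0} S(d+m,m) t^m of the diagonal sequences of the Sheffer triangle equals H(x(t;y)) − H(0). -/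
open PowerSeries

/-- Formal composition (substitution) `f(a)` of formal power series: substituting `a`
(which is intended to have zero constant term) into `f`. -/
noncomputable def PowerSeries.substitute {R : Type*} [CommRing R] (a f : R⟦X⟧) : R⟦X⟧ :=
  PowerSeries.mk fun n => ∑ k ∈ Finset.range (n + 1),
    PowerSeries.coeff (R := R) k f * PowerSeries.coeff (R := R) n (a ^ k)


open Finset

namespace Sheffer

variable {R : Type*} [CommRing R]

theorem coeff_pow_zero {a : R⟦X⟧} (ha : constantCoeff (R := R) a = 0)
    {n k : ℕ} (h : n < k) : coeff (R := R) n (a ^ k) = 0 := by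
  have hx : (X : R⟦X⟧) ∣ a := X_dvd_iff.mpr ha
  have : (X : R⟦X⟧) ^ k ∣ a ^ k := pow_dvd_pow_of_dvd hx k
  exact (X_pow_dvd_iff.mp this) n h

theorem coeff_dF (f : R⟦X⟧) (n : ℕ) :
    coeff (R := R) n f.derivativeFun = coeff (R := R) (n + 1) f * (n + 1) :=
  coeff_derivative f n

theorem dF_C (r : R) : (C r : R⟦X⟧).derivativeFun = 0 := derivative_C

theorem coeff_substitute (a h : R⟦X⟧) (n : ℕ) :
    coeff (R := R) n (a.substitute h) = ∑ k ∈ range (n + 1), coeff (R := R) k h * coeff (R := R) n (a ^ k) :=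
  coeff_mk _ _

/-- workhorse -/
theorem coeff_mul_substitute {a : R⟦X⟧} (ha : constantCoeff (R := R) a = 0) (b h : R⟦X⟧) (n : ℕ) :
    coeff (R := R) n (b * a.substitute h)
      = ∑ j ∈ range (n + 1), coeff (R := R) j h * coeff (R := R) n (b * a ^ j) := by
  rw [coeff_mul]
  have step : ∀ p ∈ antidiagonal n,
      coeff (R := R) p.1 b * coeff (R := R) p.2 (a.substitute h)
        = ∑ j ∈ range (n + 1), coeff (R := R) j h * (coeff (R := R) p.1 b * coeff (R := R) p.2 (a ^ j)) := by
    rintro ⟨p, q⟩ hpq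
    rw [Finset.HasAntidiagonal.mem_antidiagonal] at hpq
    simp only [coeff_substitute, Finset.mul_sum]
    have hsub : range (q + 1) ⊆ range (n + 1) := Finset.range_subset_range.mpr (by omega)
    rw [Finset.sum_subset hsub]
    · exact Finset.sum_congr rfl fun j _ => by ring
    · intro j hj hj'
      rw [Finset.mem_range] at hj hj'
      rw [coeff_pow_zero ha (by omega), mul_zero, mul_zero]
  rw [Finset.sum_congr rfl step, Finset.sum_comm]
  refine Finset.sum_congr rfl fun j _ => ?_
  rw [coeff_mul, Finset.mul_sum]

end Sheffer

namespace Sheffer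
variable {R : Type*} [CommRing R]

theorem sum_sum_antidiagonal {M : Type*} [AddCommMonoid M] (F : ℕ → ℕ → M) (n : ℕ)
    (hF : ∀ i j, n < i + j → F i j = 0) :
    ∑ k ∈ range (n + 1), ∑ p ∈ antidiagonal k, F p.1 p.2
      = ∑ i ∈ range (n + 1), ∑ j ∈ range (n + 1), F i j := by
  rw [← Finset.sum_biUnion (by
    intro k _ l _ hkl
    exact Finset.disjoint_left.mpr fun p hp hp' => hkl (by
      rw [Finset.HasAntidiagonal.mem_antidiagonal] at hp hp'; omega))]
  rw [← Finset.sum_product']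
  apply Finset.sum_subset
  · intro p hp
    rw [Finset.mem_biUnion] at hp
    obtain ⟨k, hk, hpk⟩ := hp
    rw [Finset.HasAntidiagonal.mem_antidiagonal] at hpk
    rw [Finset.mem_range] at hk
    simp only [Finset.mem_product, Finset.mem_range]
    omega
  · intro p hp hp'
    apply hF
    by_contra hc
    exact hp' (Finset.mem_biUnion.mpr ⟨p.1 + p.2, Finset.mem_range.mpr (by omega),
      Finset.HasAntidiagonal.mem_antidiagonal.mpr rfl⟩)

theorem substitute_mul {a : R⟦X⟧} (ha : constantCoeff (R := R) a = 0) (h₁ h₂ : R⟦X⟧) :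
    a.substitute (h₁ * h₂) = a.substitute h₁ * a.substitute h₂ := by
  ext n
  rw [coeff_mul_substitute ha, coeff_substitute]
  have lhs_eq : ∀ k ∈ range (n + 1), coeff (R := R) k (h₁ * h₂) * coeff (R := R) n (a ^ k)
      = ∑ p ∈ antidiagonal k, coeff (R := R) p.1 h₁ * coeff (R := R) p.2 h₂ * coeff (R := R) n (a ^ (p.1 + p.2)) := by
    intro k _
    rw [coeff_mul, Finset.sum_mul]
    exact Finset.sum_congr rfl fun p hp => by
      rw [Finset.HasAntidiagonal.mem_antidiagonal] at hp; rw [hp]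
  rw [Finset.sum_congr rfl lhs_eq,
    sum_sum_antidiagonal (fun i j => coeff (R := R) i h₁ * coeff (R := R) j h₂ * coeff (R := R) n (a ^ (i + j))) n
      (fun i j hij => by simp [coeff_pow_zero ha hij])]
  rw [Finset.sum_comm]
  refine Finset.sum_congr rfl fun j _ => ?_
  rw [mul_comm (a.substitute h₁) (a ^ j), coeff_mul_substitute ha (a ^ j) h₁ n,
    Finset.mul_sum]
  refine Finset.sum_congr rfl fun i _ => ?_
  rw [← pow_add, add_comm j i]
  ring

end Sheffer

namespace Sheffer
variable {R : Type*} [CommRing R]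

theorem substitute_X_self (h : R⟦X⟧) : (X : R⟦X⟧).substitute h = h := by
  ext n
  rw [coeff_substitute]
  rw [Finset.sum_eq_single n]
  · rw [X_pow_eq, coeff_monomial_same, mul_one]
  · intro k _ hk
    rw [X_pow_eq, coeff_monomial, if_neg (fun hh => hk hh.symm), mul_zero]
  · intro hn
    exact absurd (Finset.self_mem_range_succ n) hn

theorem map_substitute {S : Type*} [CommRing S] (φ : R →+* S) (a h : R⟦X⟧) :
    PowerSeries.map φ (a.substitute h)
      = (PowerSeries.map φ a).substitute (PowerSeries.map φ h) := by
  ext n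
  rw [coeff_map, coeff_substitute, coeff_substitute, map_sum]
  refine Finset.sum_congr rfl fun k _ => ?_
  rw [map_mul, coeff_map, ← map_pow, coeff_map]

theorem derivativeFun_pow (a : R⟦X⟧) (k : ℕ) :
    (a ^ (k + 1)).derivativeFun = ((k : R⟦X⟧) + 1) * (a ^ k * a.derivativeFun) := by
  induction k with
  | zero => simp [pow_one]
  | succ k ih =>
    rw [pow_succ, derivativeFun_mul, ih, smul_eq_mul, smul_eq_mul]
    push_cast
    ring

end Sheffer

namespace Sheffer
variable {R : Type*} [CommRing R]

theorem coeff_natCast_add_one_mul (j n : ℕ) (u : R⟦X⟧) :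
    coeff (R := R) n (((j : R⟦X⟧) + 1) * u) = ((j : R) + 1) * coeff (R := R) n u := by
  have : ((j : R⟦X⟧) + 1) = C ((j : R) + 1) := by
    rw [map_add, map_one, map_natCast]
  rw [this, coeff_C_mul]

theorem derivative_substitute {a : R⟦X⟧} (ha : constantCoeff (R := R) a = 0) (h : R⟦X⟧) :
    (a.substitute h).derivativeFun = a.substitute h.derivativeFun * a.derivativeFun := by
  ext n
  rw [coeff_dF, coeff_substitute, Finset.sum_mul,
    mul_comm (a.substitute h.derivativeFun) a.derivativeFun,
    coeff_mul_substitute ha a.derivativeFun h.derivativeFun n]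
  rw [Finset.sum_range_succ']
  have h0 : coeff (R := R) 0 h * coeff (R := R) (n + 1) (a ^ 0) * ((n : R) + 1) = 0 := by
    rw [pow_zero, coeff_one, if_neg (Nat.succ_ne_zero n)]
    ring
  rw [h0, add_zero]
  refine Finset.sum_congr rfl fun j _ => ?_
  have : coeff (R := R) (n + 1) (a ^ (j + 1)) * ((n : R) + 1)
      = coeff (R := R) n ((a ^ (j + 1)).derivativeFun) := by
    rw [coeff_dF]
  rw [mul_assoc, this, derivativeFun_pow, coeff_natCast_add_one_mul,
    coeff_dF, mul_comm a.derivativeFun (a ^ j)]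
  ring

end Sheffer

namespace Sheffer
variable {R : Type*} [CommRing R]

theorem derivativeFun_zero : (0 : R⟦X⟧).derivativeFun = 0 := by
  simpa using dF_C (0 : R)

theorem derivativeFun_sum {ι : Type*} (s : Finset ι) (f : ι → R⟦X⟧) :
    (∑ i ∈ s, f i).derivativeFun = ∑ i ∈ s, (f i).derivativeFun := by
  classical
  induction s using Finset.induction with
  | empty => simp [derivativeFun_zero]
  | insert _ _ h ih =>
    rw [Finset.sum_insert h, Finset.sum_insert h, derivativeFun_add, ih]

variable {A : Type*} [CommRing A]

/-- Coefficient-wise derivative (derivative "in `t`"). -/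
noncomputable def Dt (F : (A⟦X⟧)⟦X⟧) : (A⟦X⟧)⟦X⟧ :=
  mk fun n => (coeff (R := A⟦X⟧) n F).derivativeFun

theorem coeff_Dt (F : (A⟦X⟧)⟦X⟧) (n : ℕ) :
    coeff (R := A⟦X⟧) n (Dt F) = (coeff (R := A⟦X⟧) n F).derivativeFun :=
  coeff_mk _ _

theorem constantCoeff_Dt {F : (A⟦X⟧)⟦X⟧} (hF : constantCoeff (R := A⟦X⟧) F = 0) :
    constantCoeff (R := A⟦X⟧) (Dt F) = 0 := by
  rw [← coeff_zero_eq_constantCoeff_apply, coeff_Dt,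
    coeff_zero_eq_constantCoeff_apply, hF, derivativeFun_zero]

theorem Dt_mul (F G : (A⟦X⟧)⟦X⟧) : Dt (F * G) = Dt F * G + F * Dt G := by
  refine PowerSeries.ext fun n => ?_
  rw [coeff_Dt, map_add, coeff_mul (φ := Dt F), coeff_mul (φ := F), coeff_mul,
    derivativeFun_sum, ← Finset.sum_add_distrib]
  refine Finset.sum_congr rfl fun p _ => ?_
  rw [derivativeFun_mul, smul_eq_mul, smul_eq_mul, coeff_Dt, coeff_Dt]
  ring

theorem Dt_pow (a : (A⟦X⟧)⟦X⟧) (k : ℕ) :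
    Dt (a ^ (k + 1)) = ((k : (A⟦X⟧)⟦X⟧) + 1) * (a ^ k * Dt a) := by
  induction k with
  | zero =>
    rw [pow_one, pow_zero]
    simp
  | succ k ih =>
    rw [pow_succ, Dt_mul, ih]
    push_cast
    ring

theorem Dt_one : Dt (1 : (A⟦X⟧)⟦X⟧) = 0 := by
  refine PowerSeries.ext fun n => ?_
  rw [coeff_Dt, map_zero, coeff_one]
  split
  · exact derivativeFun_one
  · exact derivativeFun_zero

theorem coeff_mul_pow_zero {a b : (A⟦X⟧)⟦X⟧} (ha : constantCoeff (R := A⟦X⟧) a = 0)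
    (hb : constantCoeff (R := A⟦X⟧) b = 0) (n : ℕ) : coeff (R := A⟦X⟧) n (b * a ^ n) = 0 := by
  rw [coeff_mul]
  refine Finset.sum_eq_zero fun p hp => ?_
  rw [Finset.HasAntidiagonal.mem_antidiagonal] at hp
  rcases Nat.lt_or_ge p.2 n with h | h
  · rw [coeff_pow_zero ha h, mul_zero]
  · have hp1 : p.1 = 0 := by omega
    rw [hp1, coeff_zero_eq_constantCoeff_apply, hb, zero_mul]

theorem Dt_substitute {a : (A⟦X⟧)⟦X⟧} (ha : constantCoeff (R := A⟦X⟧) a = 0)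
    {h : (A⟦X⟧)⟦X⟧} (hh : ∀ k, (coeff (R := A⟦X⟧) k h).derivativeFun = 0) :
    Dt (a.substitute h) = a.substitute h.derivativeFun * Dt a := by
  refine PowerSeries.ext fun n => ?_
  rw [coeff_Dt, coeff_substitute, derivativeFun_sum,
    mul_comm (a.substitute h.derivativeFun) (Dt a)]
  rw [coeff_mul_substitute ha (Dt a) h.derivativeFun n]
  have lhs_eq : ∀ k ∈ range (n + 1),
      (coeff (R := A⟦X⟧) k h * coeff (R := A⟦X⟧) n (a ^ k)).derivativeFun
        = coeff (R := A⟦X⟧) k h * coeff (R := A⟦X⟧) n (Dt (a ^ k)) := by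
    intro k _
    rw [derivativeFun_mul, smul_eq_mul, smul_eq_mul, hh k, mul_zero, add_zero, coeff_Dt]
  rw [Finset.sum_congr rfl lhs_eq, Finset.sum_range_succ']
  have h0 : coeff (R := A⟦X⟧) 0 h * coeff (R := A⟦X⟧) n (Dt ((a : (A⟦X⟧)⟦X⟧) ^ 0)) = 0 := by
    rw [pow_zero, Dt_one, map_zero, mul_zero]
  rw [h0, add_zero, Finset.sum_range_succ]
  have hlast : coeff (R := A⟦X⟧) n h.derivativeFun * coeff (R := A⟦X⟧) n (Dt a * a ^ n) = 0 := by
    rw [coeff_mul_pow_zero ha (constantCoeff_Dt ha), mul_zero]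
  rw [hlast, add_zero]
  refine Finset.sum_congr rfl fun j _ => ?_
  rw [Dt_pow, coeff_natCast_add_one_mul, coeff_dF,
    mul_comm (Dt a) (a ^ j)]
  push_cast
  ring

end Sheffer

namespace Sheffer
variable {R : Type*} [CommRing R]

theorem derivativeFun_X : (X : R⟦X⟧).derivativeFun = 1 := by
  ext n
  rw [coeff_dF, coeff_X, coeff_one]
  cases n <;> simp

variable {A : Type*} [CommRing A]

theorem Dt_add (F G : (A⟦X⟧)⟦X⟧) : Dt (F + G) = Dt F + Dt G := by
  refine PowerSeries.ext fun n => ?_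
  rw [coeff_Dt, map_add, map_add, coeff_Dt, coeff_Dt, derivativeFun_add]

theorem Dt_X : Dt (X : (A⟦X⟧)⟦X⟧) = 0 := by
  refine PowerSeries.ext fun n => ?_
  rw [coeff_Dt, map_zero, coeff_X]
  split
  · exact derivativeFun_one
  · exact derivativeFun_zero

theorem Dt_C (u : A⟦X⟧) : Dt (PowerSeries.C (R := A⟦X⟧) u) = PowerSeries.C (R := A⟦X⟧) u.derivativeFun := by
  refine PowerSeries.ext fun n => ?_
  rw [coeff_Dt, coeff_C, coeff_C]
  split
  · rfl
  · exact derivativeFun_zero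

/-- Integration of rational power series. -/
noncomputable def integral (P : ℚ⟦X⟧) : ℚ⟦X⟧ :=
  mk fun k => if k = 0 then 0 else coeff (R := ℚ) (k - 1) P / k

theorem derivativeFun_integral (P : ℚ⟦X⟧) : (integral P).derivativeFun = P := by
  ext n
  rw [coeff_dF, integral, coeff_mk, if_neg (Nat.succ_ne_zero n)]
  have : ((n : ℚ) + 1) ≠ 0 := by positivity
  field_simp
  simp only [Nat.add_sub_cancel, Nat.cast_add, Nat.cast_one]
  ring

/-- The operator `J`: `(J P)' = P' * f`, `J P (0) = 0`. -/
noncomputable def Jop (f P : ℚ⟦X⟧) : ℚ⟦X⟧ := integral (P.derivativeFun * f)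

theorem derivativeFun_Jop (f P : ℚ⟦X⟧) :
    (Jop f P).derivativeFun = P.derivativeFun * f := derivativeFun_integral _

end Sheffer
open PowerSeries Finset Sheffer


open Sheffer

/-- **E.g.f. of the o.g.f.s of the diagonal sequences of a Sheffer triangle.**
Let `S = (g, f)` be a Sheffer triangle, with entries `S(n,m) = n!·[x^n](g·f^m/m!)`.
Let `X = x(t;y)` be the series in `(ℚ[[t]])[[y]]` with zero constant term satisfying
`X − t·f(X) = y`, and let `H` be the antiderivative of `g` with `H(0) = 0`.  Then the
coefficient of `t^m·y^(d+1)` in `H(x(t;y))` is `S(d+m,m)/(d+1)!`; i.e.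
`H(x(t;y)) − H(0)` is the e.g.f. `Σ_d GDS(d,t)·y^(d+1)/(d+1)!` of the o.g.f.s
`GDS(d,t) = Σ_m S(d+m,m)·t^m` of the diagonals of the triangle. -/
theorem sheffer_diagonal_egf (g f : ℚ⟦X⟧)
    (hg : constantCoeff (R := ℚ) g = 1) (hf0 : constantCoeff (R := ℚ) f = 0) (hf1 : coeff (R := ℚ) 1 f ≠ 0)
    (S : ℕ → ℕ → ℚ)
    (hS : ∀ n m : ℕ, S n m = (n.factorial : ℚ) * coeff (R := ℚ) n (g * f ^ m) / m.factorial)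
    (H : ℚ⟦X⟧) (hH0 : constantCoeff (R := ℚ) H = 0) (hH : H.derivativeFun = g)
    (Xser : (ℚ⟦X⟧)⟦X⟧)
    (hX0 : constantCoeff (R := ℚ⟦X⟧) Xser = 0)
    (hXeq : Xser - PowerSeries.C (R := ℚ⟦X⟧) PowerSeries.X *
        PowerSeries.substitute Xser (PowerSeries.map (PowerSeries.C (R := ℚ)) f)
      = PowerSeries.X) :
    ∀ d m : ℕ,
      coeff (R := ℚ) m (coeff (R := ℚ⟦X⟧) (d + 1)
          (PowerSeries.substitute Xser (PowerSeries.map (PowerSeries.C (R := ℚ)) H)))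
        = S (d + m) m / (d + 1).factorial := by
  intro d m
  set T : (ℚ⟦X⟧)⟦X⟧ := PowerSeries.C (R := ℚ⟦X⟧) PowerSeries.X with hT
  set Fm : (ℚ⟦X⟧)⟦X⟧ := PowerSeries.map (PowerSeries.C (R := ℚ)) f with hFm
  have hmapC_dF : ∀ Q : ℚ⟦X⟧, (PowerSeries.map (PowerSeries.C (R := ℚ)) Q).derivativeFun
      = PowerSeries.map (PowerSeries.C (R := ℚ)) Q.derivativeFun := by
    intro Q
    refine PowerSeries.ext fun n => ?_
    rw [coeff_dF, coeff_map, coeff_map, coeff_dF, map_mul]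
    congr 1
    simp [map_add, map_natCast, map_one]
  have hconst : ∀ (Q : ℚ⟦X⟧) (k : ℕ),
      (coeff (R := ℚ⟦X⟧) k (PowerSeries.map (PowerSeries.C (R := ℚ)) Q)).derivativeFun = 0 := by
    intro Q k; rw [coeff_map]; exact dF_C _
  have hXeq' : Xser = PowerSeries.X + T * Xser.substitute Fm := by
    rw [← hXeq]; ring
  have hdy : Xser.derivativeFun
      = 1 + T * (Xser.substitute Fm.derivativeFun * Xser.derivativeFun) := by
    conv_lhs => rw [hXeq']
    rw [derivativeFun_add, derivativeFun_X, derivativeFun_mul, smul_eq_mul, smul_eq_mul,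
      hT, dF_C, mul_zero, add_zero, derivative_substitute hX0]
  have hdt : Dt Xser
      = Xser.substitute Fm + T * (Xser.substitute Fm.derivativeFun * Dt Xser) := by
    conv_lhs => rw [hXeq']
    rw [Dt_add, Dt_X, Dt_mul, hT, Dt_C, derivativeFun_X, map_one,
      Dt_substitute hX0 (hconst f), zero_add, one_mul, ← hFm]
  have hUdy : (1 - T * Xser.substitute Fm.derivativeFun) * Xser.derivativeFun = 1 := by
    linear_combination hdy
  have hUdt : (1 - T * Xser.substitute Fm.derivativeFun) * Dt Xser
      = Xser.substitute Fm := by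
    linear_combination hdt
  have hDtDy : Dt Xser = Xser.substitute Fm * Xser.derivativeFun := by
    linear_combination Xser.derivativeFun * hUdt - Dt Xser * hUdy
  have hPDE : ∀ Q : ℚ⟦X⟧,
      Dt (Xser.substitute (PowerSeries.map (PowerSeries.C (R := ℚ)) Q))
        = (Xser.substitute (PowerSeries.map (PowerSeries.C (R := ℚ)) (Jop f Q))).derivativeFun := by
    intro Q
    rw [Dt_substitute hX0 (hconst Q), derivative_substitute hX0, hmapC_dF, hmapC_dF,
      derivativeFun_Jop, map_mul, substitute_mul hX0, hDtDy, ← hFm]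
    ring
  have hmapmap : ∀ Q : ℚ⟦X⟧, PowerSeries.map (constantCoeff (R := ℚ))
      (PowerSeries.map (PowerSeries.C (R := ℚ)) Q) = Q := by
    intro Q
    ext k
    rw [coeff_map, coeff_map, constantCoeff_C]
  have hT0 : PowerSeries.map (constantCoeff (R := ℚ)) T = 0 := by
    refine PowerSeries.ext fun k => ?_
    rw [coeff_map, hT, coeff_C, map_zero]
    split
    · exact constantCoeff_X
    · exact map_zero _
  have hEX : PowerSeries.map (constantCoeff (R := ℚ)) Xser = PowerSeries.X := by
    have h2 := congrArg (PowerSeries.map (constantCoeff (R := ℚ))) hXeq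
    rw [map_sub, map_mul, hT0, zero_mul, sub_zero, PowerSeries.map_X] at h2
    exact h2
  have hbase : ∀ (Q : ℚ⟦X⟧) (n : ℕ),
      coeff (R := ℚ) 0 (coeff (R := ℚ⟦X⟧) n
        (Xser.substitute (PowerSeries.map (PowerSeries.C (R := ℚ)) Q))) = coeff (R := ℚ) n Q := by
    intro Q n
    rw [coeff_zero_eq_constantCoeff]
    rw [← coeff_map (constantCoeff (R := ℚ)) n, map_substitute, hEX, hmapmap, substitute_X_self]
  have key : ∀ (k : ℕ) (Q : ℚ⟦X⟧) (n : ℕ),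
      (k.factorial : ℚ) * (n.factorial : ℚ)
          * coeff (R := ℚ) k (coeff (R := ℚ⟦X⟧) n
              (Xser.substitute (PowerSeries.map (PowerSeries.C (R := ℚ)) Q)))
        = ((n + k).factorial : ℚ) * coeff (R := ℚ) (n + k) ((Jop f)^[k] Q) := by
    intro k
    induction k with
    | zero => intro Q n; simp [hbase]
    | succ k ih =>
      intro Q n
      have e0 := congrArg (coeff (R := ℚ) k) (congrArg (coeff (R := ℚ⟦X⟧) n) (hPDE Q))
      rw [coeff_Dt, coeff_dF (R := ℚ⟦X⟧), coeff_dF (R := ℚ),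
        mul_comm (coeff (R := ℚ⟦X⟧) (n+1) _) ((n : ℚ⟦X⟧) + 1),
        coeff_natCast_add_one_mul] at e0
      have ih' := ih (Jop f Q) (n + 1)
      rw [Function.iterate_succ_apply, show n + (k + 1) = n + 1 + k from by omega]
      push_cast [Nat.factorial_succ] at ih' ⊢
      linear_combination (k.factorial : ℚ) * (n.factorial : ℚ) * e0 + ih'
  have hJm : ∀ k : ℕ, (((Jop f)^[k]) H).derivativeFun = g * f ^ k := by
    intro k
    induction k with
    | zero => simpa using hH
    | succ k ihk =>
      rw [Function.iterate_succ_apply', derivativeFun_Jop, ihk, pow_succ, mul_assoc]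
  have hkey := key m H (d + 1)
  have hc : coeff (R := ℚ) (d + m) (g * f ^ m)
      = ((d : ℚ) + m + 1) * coeff (R := ℚ) (d + m + 1) ((Jop f)^[m] H) := by
    rw [← hJm m, coeff_dF]
    push_cast
    ring
  rw [hS, hc]
  have hm0 : (m.factorial : ℚ) ≠ 0 := Nat.cast_ne_zero.mpr m.factorial_ne_zero
  have hd0 : ((d + 1).factorial : ℚ) ≠ 0 := Nat.cast_ne_zero.mpr (d + 1).factorial_ne_zero
  rw [div_div, eq_div_iff (mul_ne_zero hm0 hd0)]
  have hfac : ((d + 1 + m).factorial : ℚ) = ((d + m).factorial : ℚ) * ((d : ℚ) + m + 1) := by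
    rw [show d + 1 + m = (d + m) + 1 from by omega, Nat.factorial_succ]
    push_cast
    ring
  rw [hfac, show d + 1 + m = d + m + 1 from by omega] at hkey
  linear_combination hkey
end

section
/- Let G, F be formal power series over ℚ with G(0) = 1, F(0) = 0 and with the coefficient of x^1 in F nonzero, and define the Riordan triangle entries R(n,m) := [x^n]( G(x)·F(x)^m ). Work in the ring (ℚ[[t]])[[y]] and let X = x(t;y) be the element with zero constant term satisfying X − t·F(X) = y (the compositional inverse of y(t;x) = x − t·F(x)). Let H be the formal power series over ℚ with H(0) = 0 whose formal derivative is G. Then for all integers d ≥ 0 and p ≥ 0, the coefficient of t^p·y^{d+1} in H(x(t;y)) equals binom(d+p, p)·R(d+p, p)/(d+1). Equivalently, the logarithmic generating function Σ_{d≥0} G D̂(d,t)·y^{d+1}/(d+1), where G D̂(d,t) := Σ_{p≥0} binom(d+p,p)·R(d+p,p)·t^p is the ordinary generating function of the products of the d-th diagonal entries of Pascal's triangle with those of the Riordan triangle, equals H(x(t;y)) − H(0). -/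
open PowerSeries

namespace RiordanAux
open Finset

variable {R : Type*} [CommRing R]

lemma coeff_substitute (a f : R⟦X⟧) (n : ℕ) :
    coeff (R := R) n (substitute a f) = ∑ k ∈ range (n + 1), coeff (R := R) k f * coeff (R := R) n (a ^ k) := by
  simp [PowerSeries.substitute]

lemma shift_decomp {a : R⟦X⟧} (ha : constantCoeff (R := R) a = 0) :
    a = (mk fun p ↦ coeff (R := R) (p + 1) a) * X := by
  have := sub_const_eq_shift_mul_X a
  rwa [ha, map_zero, sub_zero] at this

lemma coeff_pow_eq_zero {a : R⟦X⟧} (ha : constantCoeff (R := R) a = 0) {k n : ℕ} (h : n < k) :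
    coeff (R := R) n (a ^ k) = 0 := by
  rw [shift_decomp ha, mul_pow, coeff_mul_X_pow', if_neg (by omega)]

lemma coeff_pow_self {a : R⟦X⟧} (ha : constantCoeff (R := R) a = 0) (k : ℕ) :
    coeff (R := R) k (a ^ k) = (coeff (R := R) 1 a) ^ k := by
  rw [shift_decomp ha, mul_pow]
  have : coeff (R := R) k ((mk fun p ↦ coeff (R := R) (p+1) a) ^ k * X ^ k)
      = coeff (R := R) 0 ((mk fun p ↦ coeff (R := R) (p+1) a) ^ k) := by
    simpa using coeff_mul_X_pow ((mk fun p ↦ coeff (R := R) (p+1) a) ^ k) k 0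
  rw [this, coeff_zero_eq_constantCoeff, map_pow]
  simp [constantCoeff_mk]

lemma coeff_substitute' {a : R⟦X⟧} (ha : constantCoeff (R := R) a = 0) (f : R⟦X⟧) {n N : ℕ}
    (h : n < N) :
    coeff (R := R) n (substitute a f) = ∑ k ∈ range N, coeff (R := R) k f * coeff (R := R) n (a ^ k) := by
  rw [coeff_substitute]
  apply Finset.sum_subset
  · intro k hk; simp only [mem_range] at *; omega
  · intro k _ hk
    simp only [mem_range, not_lt] at hk
    rw [coeff_pow_eq_zero ha (by omega), mul_zero]

lemma substitute_add (a f g : R⟦X⟧) :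
    substitute a (f + g) = substitute a f + substitute a g := by
  ext n
  simp [coeff_substitute, add_mul, Finset.sum_add_distrib]

lemma substitute_C (a : R⟦X⟧) (r : R) : substitute a (C (R := R) r) = C (R := R) r := by
  ext n
  rw [coeff_substitute]
  rw [Finset.sum_eq_single 0]
  · simp [coeff_C]
  · intro k _ hk; simp [coeff_C, hk]
  · simp
lemma substitute_one (a : R⟦X⟧) : substitute a 1 = 1 := by
  simpa using substitute_C a 1

lemma substitute_X {a : R⟦X⟧} (ha : constantCoeff (R := R) a = 0) : substitute a X = a := by
  ext n
  rw [coeff_substitute, Finset.sum_eq_single 1]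
  · cases n with
    | zero => simp [coeff_X, ← coeff_zero_eq_constantCoeff, ha]
    | succ m => simp [coeff_X]
  · intro k _ hk; simp [coeff_X, hk]
  · intro h; simp only [mem_range, not_lt] at h
    have hn : n = 0 := by omega
    subst hn
    simp [coeff_X, coeff_zero_eq_constantCoeff_apply, ha]

lemma antidiag_biUnion (n : ℕ) :
    (range (n+1)).biUnion (fun k => antidiagonal k)
      = (range (n+1) ×ˢ range (n+1)).filter (fun p => p.1 + p.2 ≤ n) := by
  ext ⟨i, j⟩
  simp only [mem_biUnion, mem_range, Finset.HasAntidiagonal.mem_antidiagonal, mem_filter, mem_product]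
  constructor
  · rintro ⟨k, hk, rfl⟩; omega
  · intro h; exact ⟨i + j, by omega, rfl⟩

lemma substitute_mul {a : R⟦X⟧} (ha : constantCoeff (R := R) a = 0) (f g : R⟦X⟧) :
    substitute a (f * g) = substitute a f * substitute a g := by
  ext n
  have key : ∀ i j : ℕ, n < i + j → coeff (R := R) n (a ^ (i + j)) = 0 :=
    fun i j h => coeff_pow_eq_zero ha h
  rw [coeff_mul]
  -- RHS
  have hrhs : ∑ p ∈ antidiagonal n, coeff (R := R) p.1 (substitute a f) * coeff (R := R) p.2 (substitute a g)
      = ∑ i ∈ range (n+1), ∑ j ∈ range (n+1),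
          coeff (R := R) i f * coeff (R := R) j g * coeff (R := R) n (a ^ (i + j)) := by
    have expand : ∀ p ∈ antidiagonal n,
        coeff (R := R) p.1 (substitute a f) * coeff (R := R) p.2 (substitute a g)
        = ∑ i ∈ range (n+1), ∑ j ∈ range (n+1),
            coeff (R := R) i f * coeff (R := R) j g * (coeff (R := R) p.1 (a ^ i) * coeff (R := R) p.2 (a ^ j)) := by
      rintro ⟨u, v⟩ huv
      rw [Finset.HasAntidiagonal.mem_antidiagonal] at huv
      rw [coeff_substitute' ha f (show u < n+1 by omega),
          coeff_substitute' ha g (show v < n+1 by omega), Finset.sum_mul_sum]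
      apply Finset.sum_congr rfl; intro i _
      apply Finset.sum_congr rfl; intro j _
      ring
    rw [Finset.sum_congr rfl expand, Finset.sum_comm]
    apply Finset.sum_congr rfl; intro i _
    rw [Finset.sum_comm]
    apply Finset.sum_congr rfl; intro j _
    rw [← Finset.mul_sum, pow_add, coeff_mul]
  rw [hrhs]
  -- LHS
  have hlhs : coeff (R := R) n (substitute a (f * g))
      = ∑ k ∈ range (n+1), ∑ p ∈ antidiagonal k,
          coeff (R := R) p.1 f * coeff (R := R) p.2 g * coeff (R := R) n (a ^ (p.1 + p.2)) := by
    rw [coeff_substitute]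
    apply Finset.sum_congr rfl; intro k _
    rw [coeff_mul, Finset.sum_mul]
    apply Finset.sum_congr rfl; intro p hp
    rw [Finset.HasAntidiagonal.mem_antidiagonal] at hp
    rw [hp]
  rw [hlhs]
  rw [← Finset.sum_biUnion (by
    intro x _ y _ hxy
    simp only [Finset.disjoint_left]
    intro p hp hq
    rw [Finset.HasAntidiagonal.mem_antidiagonal] at hp hq
    exact hxy (hp ▸ hq))]
  rw [antidiag_biUnion]
  rw [Finset.sum_filter_of_ne (by
    rintro ⟨i, j⟩ _ hne
    by_contra hgt
    exact hne (by rw [key i j (by omega), mul_zero]))]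
  rw [Finset.sum_product]

/-- substitution as ring hom -/
noncomputable def substituteHom (a : R⟦X⟧) (ha : constantCoeff (R := R) a = 0) : R⟦X⟧ →+* R⟦X⟧ where
  toFun := substitute a
  map_one' := substitute_one a
  map_mul' := substitute_mul ha
  map_zero' := by ext n; simp [coeff_substitute]
  map_add' := substitute_add a

@[simp] lemma substituteHom_apply (a : R⟦X⟧) (ha) (f : R⟦X⟧) :
    substituteHom a ha f = substitute a f := rfl


lemma coeff_dFun (f : R⟦X⟧) (n : ℕ) :
    coeff n f.derivativeFun = coeff (n + 1) f * (n + 1) := coeff_derivative f n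

lemma dFun_C (r : R) : (C r : R⟦X⟧).derivativeFun = 0 := derivative_C

lemma deriv_mul' (f g : R⟦X⟧) :
    (f * g).derivativeFun = f * g.derivativeFun + g * f.derivativeFun := by
  rw [derivativeFun_mul]; simp only [smul_eq_mul]

lemma deriv_zero : (0 : R⟦X⟧).derivativeFun = 0 := by
  ext m; simp [coeff_dFun]

lemma deriv_X : (X : R⟦X⟧).derivativeFun = 1 := by
  ext m
  rw [coeff_dFun]
  cases m with
  | zero => simp [coeff_X, coeff_one]
  | succ m => simp [coeff_X, coeff_one]

lemma deriv_pow_succ (f : R⟦X⟧) (k : ℕ) :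
    (f ^ (k+1)).derivativeFun = ((k:R⟦X⟧)+1) * (f ^ k * f.derivativeFun) := by
  induction k with
  | zero => simp [pow_one, pow_zero]
  | succ k IH =>
    rw [pow_succ, deriv_mul', IH]
    push_cast
    ring

lemma deriv_sub (f g : R⟦X⟧) :
    (f - g).derivativeFun = f.derivativeFun - g.derivativeFun := by
  ext m; simp [coeff_dFun, sub_mul]

lemma deriv_sum {ι : Type*} (s : Finset ι) (f : ι → R⟦X⟧) :
    (∑ i ∈ s, f i).derivativeFun = ∑ i ∈ s, (f i).derivativeFun := by
  classical
  induction s using Finset.induction_on with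
  | empty => simp [deriv_zero]
  | insert _ _ h IH => rw [Finset.sum_insert h, Finset.sum_insert h, derivativeFun_add, IH]

lemma hockey (m : ℕ) : ∀ p : ℕ, ∑ j ∈ range (p+1), (j+m).choose m = (p+m+1).choose (m+1)
  | 0 => by simp
  | p+1 => by
    rw [Finset.sum_range_succ, hockey m p]
    rw [show p+1+m+1 = (p+m+1)+1 by omega, show p+1+m = p+m+1 by omega,
      Nat.choose_succ_succ' (p+m+1) m]
    omega

lemma vanish_of_substitute_vanish {a E : R⟦X⟧} (ha : constantCoeff (R := R) a = 0)
    (hu : IsUnit (coeff (R := R) 1 a)) {N : ℕ}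
    (h : ∀ j ≤ N, coeff (R := R) j (PowerSeries.substitute a E) = 0) : ∀ j ≤ N, coeff (R := R) j E = 0 := by
  intro j
  induction j using Nat.strong_induction_on with
  | _ j IH =>
    intro hj
    have h0 := h j hj
    rw [coeff_substitute, Finset.sum_eq_single j] at h0
    · rw [coeff_pow_self ha] at h0
      exact ((hu.pow j).mul_left_eq_zero (a := coeff (R := R) j E)).mp h0
    · intro k hk hkj
      have hk' : k < j + 1 := by simpa using hk
      rw [IH k (by omega) (by omega), zero_mul]
    · intro hc; exact absurd (self_mem_range_succ j) hc


lemma coeffV (F₁ : ℚ⟦X⟧) (V : (ℚ⟦X⟧)⟦X⟧)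
    (hV : V = 1 + (C (R := ℚ⟦X⟧) X) * ((map (C (R := ℚ)) F₁) * V)) (p : ℕ) :
    ∀ a : ℕ, coeff (R := ℚ) p (coeff (R := ℚ⟦X⟧) a V) = coeff (R := ℚ) a (F₁ ^ p) := by
  induction p with
  | zero =>
    intro a
    conv_lhs => rw [hV]
    rw [map_add (coeff (R := ℚ⟦X⟧) a), coeff_C_mul, map_add (coeff (R := ℚ) 0)]
    have h1 : coeff (R := ℚ) 0 ((X : ℚ⟦X⟧) * ((coeff (R := ℚ⟦X⟧) a) ((map (C (R := ℚ)) F₁) * V))) = 0 := by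
      rw [coeff_zero_eq_constantCoeff, map_mul, constantCoeff_X, zero_mul]
    rw [h1, add_zero, pow_zero, coeff_one, coeff_one]
    split_ifs <;> simp
  | succ p IH =>
    intro a
    conv_lhs => rw [hV]
    rw [map_add (coeff (R := ℚ⟦X⟧) a), coeff_C_mul, map_add (coeff (R := ℚ) (p+1))]
    have h1 : coeff (R := ℚ) (p+1) (coeff (R := ℚ⟦X⟧) a (1 : (ℚ⟦X⟧)⟦X⟧)) = 0 := by
      rw [coeff_one]; split_ifs <;> simp
    rw [h1, zero_add, coeff_succ_X_mul, coeff_mul, map_sum]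
    have step : ∀ x ∈ antidiagonal a,
        coeff (R := ℚ) p (coeff (R := ℚ⟦X⟧) x.1 (map (C (R := ℚ)) F₁) * coeff (R := ℚ⟦X⟧) x.2 V)
          = coeff (R := ℚ) x.1 F₁ * coeff (R := ℚ) x.2 (F₁ ^ p) := by
      intro x hx
      rw [coeff_map, coeff_C_mul, IH x.2]
    rw [Finset.sum_congr rfl step, ← coeff_mul, ← pow_succ']

lemma coeffVpow (F₁ : ℚ⟦X⟧) (V : (ℚ⟦X⟧)⟦X⟧)
    (hV : V = 1 + (C (R := ℚ⟦X⟧) X) * ((map (C (R := ℚ)) F₁) * V)) :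
    ∀ (m p a : ℕ), coeff (R := ℚ) p (coeff (R := ℚ⟦X⟧) a (V ^ (m+1)))
      = ((p+m).choose m : ℚ) * coeff (R := ℚ) a (F₁ ^ p) := by
  intro m
  induction m with
  | zero => intro p a; simp [pow_one, coeffV F₁ V hV p a]
  | succ m IH =>
    intro p a
    rw [pow_succ', coeff_mul, map_sum]
    have step : ∀ x ∈ antidiagonal a,
        coeff (R := ℚ) p (coeff (R := ℚ⟦X⟧) x.1 V * coeff (R := ℚ⟦X⟧) x.2 (V^(m+1)))
        = ∑ q ∈ antidiagonal p, ((q.2+m).choose m : ℚ) *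
            (coeff (R := ℚ) x.1 (F₁ ^ q.1) * coeff (R := ℚ) x.2 (F₁ ^ q.2)) := by
      intro x hx
      rw [coeff_mul]
      apply Finset.sum_congr rfl
      intro q hq
      rw [coeffV F₁ V hV, IH]
      ring
    rw [Finset.sum_congr rfl step, Finset.sum_comm]
    have inner : ∀ q ∈ antidiagonal p,
        (∑ x ∈ antidiagonal a, ((q.2+m).choose m : ℚ) *
            (coeff (R := ℚ) x.1 (F₁ ^ q.1) * coeff (R := ℚ) x.2 (F₁ ^ q.2)))
        = ((q.2+m).choose m : ℚ) * coeff (R := ℚ) a (F₁ ^ p) := by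
      intro q hq
      rw [Finset.HasAntidiagonal.mem_antidiagonal] at hq
      rw [← Finset.mul_sum, ← coeff_mul, ← pow_add, hq]
    rw [Finset.sum_congr rfl inner, ← Finset.sum_mul]
    congr 1
    rw [Finset.Nat.sum_antidiagonal_eq_sum_range_succ_mk]
    have hrefl := Finset.sum_range_reflect (fun j => ((j+m).choose m : ℚ)) (p+1)
    simp only [Nat.add_sub_cancel] at hrefl
    show ∑ k ∈ range (p+1), ((p - k + m).choose m : ℚ) = _
    rw [hrefl, ← Nat.cast_sum, hockey m p, show p+m+1 = p+(m+1) by omega]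

end RiordanAux

open RiordanAux Finset in
/-- **L.g.f. for diagonals of a Riordan triangle multiplied by Pascal diagonals.**
Let `R = (G, F)` be a Riordan triangle, with entries `R(n,m) = [x^n](G·F^m)`.
Let `X = x(t;y)` be the series in `(ℚ[[t]])[[y]]` with zero constant term satisfying
`X − t·F(X) = y`, and let `H` be the antiderivative of `G` with `H(0) = 0`.  Then the
coefficient of `t^p·y^(d+1)` in `H(x(t;y))` is `binom(d+p,p)·R(d+p,p)/(d+1)`; i.e.
`H(x(t;y)) − H(0)` is the l.g.f. `Σ_d GD̂(d,t)·y^(d+1)/(d+1)` of the o.g.f.s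
`GD̂(d,t) = Σ_p binom(d+p,p)·R(d+p,p)·t^p` of the products of the diagonal entries of
Pascal's triangle with those of the Riordan triangle. -/
theorem riordan_diagonal_lgf (G F : ℚ⟦X⟧)
    (hG : constantCoeff (R := ℚ) G = 1) (hF0 : constantCoeff (R := ℚ) F = 0) (hF1 : coeff (R := ℚ) 1 F ≠ 0)
    (R : ℕ → ℕ → ℚ)
    (hR : ∀ n m : ℕ, R n m = coeff (R := ℚ) n (G * F ^ m))
    (H : ℚ⟦X⟧) (hH0 : constantCoeff (R := ℚ) H = 0) (hH : H.derivativeFun = G)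
    (Xser : (ℚ⟦X⟧)⟦X⟧)
    (hX0 : constantCoeff (R := ℚ⟦X⟧) Xser = 0)
    (hXeq : Xser - PowerSeries.C (R := ℚ⟦X⟧) PowerSeries.X *
        PowerSeries.substitute Xser (PowerSeries.map (PowerSeries.C (R := ℚ)) F)
      = PowerSeries.X) :
    ∀ d p : ℕ,
      coeff (R := ℚ) p (coeff (R := ℚ⟦X⟧) (d + 1)
          (PowerSeries.substitute Xser (PowerSeries.map (PowerSeries.C (R := ℚ)) H)))
        = ((d + p).choose p : ℚ) * R (d + p) p / (d + 1) := by
  intro d p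
  classical
  set n := d + 1 with hn
  set Fmap := PowerSeries.map (C (R := ℚ)) F with hFmapdef
  set Hmap := PowerSeries.map (C (R := ℚ)) H with hHmapdef
  set Gmap := PowerSeries.map (C (R := ℚ)) G with hGmapdef
  set F₁ : ℚ⟦X⟧ := mk fun i => coeff (R := ℚ) (i+1) F with hF₁def
  have hFF₁ : F = F₁ * X := shift_decomp hF0
  set F₁map := PowerSeries.map (C (R := ℚ)) F₁ with hF₁mapdef
  set T : (ℚ⟦X⟧)⟦X⟧ := C (R := ℚ⟦X⟧) X with hTdef
  set W : (ℚ⟦X⟧)⟦X⟧ := X - T * Fmap with hWdef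
  set U : (ℚ⟦X⟧)⟦X⟧ := 1 - T * F₁map with hUdef
  have hFmapX : Fmap = F₁map * X := by
    rw [hFmapdef, hF₁mapdef, hFF₁, map_mul, map_X]
  have hWXU : W = X * U := by rw [hWdef, hUdef, hFmapX]; ring
  set S := PowerSeries.substitute Xser Hmap with hSdef
  set X₁ := coeff (R := ℚ⟦X⟧) 1 Xser with hX₁def
  set u₀ : ℚ⟦X⟧ := 1 - X * C (R := ℚ) (coeff (R := ℚ) 1 F) with hu₀def
  have hXu : X₁ * u₀ = 1 := by
    have h1 := congrArg (coeff (R := ℚ⟦X⟧) 1) hXeq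
    rw [map_sub, hTdef, coeff_C_mul] at h1
    have h2 : coeff (R := ℚ⟦X⟧) 1 (PowerSeries.substitute Xser Fmap) = C (R := ℚ) (coeff (R := ℚ) 1 F) * X₁ := by
      rw [coeff_substitute, Finset.sum_range_succ, Finset.sum_range_succ,
        Finset.sum_range_zero, zero_add, pow_one, pow_zero]
      rw [hFmapdef]
      simp [coeff_one, coeff_map, hX₁def]
    rw [h2, coeff_X, if_pos rfl, ← hX₁def] at h1
    rw [hu₀def]
    linear_combination h1
  have hu : IsUnit X₁ := IsUnit.of_mul_eq_one _ hXu
  have hcU : constantCoeff (R := ℚ⟦X⟧) U = u₀ := by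
    have hc1 : constantCoeff (R := ℚ⟦X⟧) F₁map = C (R := ℚ) (coeff (R := ℚ) 1 F) := by
      rw [← coeff_zero_eq_constantCoeff_apply, hF₁mapdef, coeff_map, hF₁def, coeff_mk]
    rw [hUdef, hTdef, hu₀def, map_sub, map_one, map_mul, constantCoeff_C, hc1]
  set u : (ℚ⟦X⟧)ˣ := ⟨u₀, X₁, by rw [mul_comm]; exact hXu, hXu⟩ with hudef
  set V := PowerSeries.invOfUnit U u with hVdef
  have hUV : U * V = 1 := mul_invOfUnit U u hcU
  have hVrec : V = 1 + C (R := ℚ⟦X⟧) X * (F₁map * V) := by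
    have h2 := hUV
    rw [hUdef, hTdef] at h2
    linear_combination h2
  -- derivative facts
  have hDW : W.derivativeFun = U + X * U.derivativeFun := by
    rw [hWXU, deriv_mul', deriv_X]
    ring
  have hDUV : U.derivativeFun * V + U * V.derivativeFun = 0 := by
    have h2 := congrArg PowerSeries.derivativeFun hUV
    rw [deriv_mul', derivativeFun_one] at h2
    linear_combination h2
  -- the key per-power computation
  have hkey : ∀ k' : ℕ, k' + 1 ≤ n →
      coeff (R := ℚ⟦X⟧) d ((W ^ (k'+1)).derivativeFun * V ^ n) = if k' + 1 = n then (n : ℚ⟦X⟧) else 0 := by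
    intro k' hk'
    set m := n - (k'+1) with hm
    have hdm : d = m + k' := by omega
    have hUk : U^(k'+1) * V^n = V^m := by
      have hsplit : V^n = V^(k'+1) * V^m := by rw [← pow_add]; congr 1; omega
      calc U^(k'+1) * V^n = (U*V)^(k'+1) * V^m := by rw [hsplit, mul_pow]; ring
      _ = V^m := by rw [hUV, one_pow, one_mul]
    have hUk1 : U^k' * V^n = V^(m+1) := by
      have hsplit : V^n = V^k' * V^(m+1) := by rw [← pow_add]; congr 1; omega
      calc U^k' * V^n = (U*V)^k' * V^(m+1) := by rw [hsplit, mul_pow]; ring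
      _ = V^(m+1) := by rw [hUV, one_pow, one_mul]
    have hDWk : (W ^ (k'+1)).derivativeFun * V ^ n
        = C (R := ℚ⟦X⟧) ((k' : ℚ⟦X⟧)+1) * (X^k' * V^m + X^(k'+1) * (U.derivativeFun * V^(m+1))) := by
      rw [deriv_pow_succ, hDW, hWXU, mul_pow,
        show C (R := ℚ⟦X⟧) ((k' : ℚ⟦X⟧)+1) = ((k' : (ℚ⟦X⟧)⟦X⟧)+1) by rw [map_add, map_natCast, map_one]]
      linear_combination (((k' : (ℚ⟦X⟧)⟦X⟧)+1) * X^k') * hUk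
        + (((k' : (ℚ⟦X⟧)⟦X⟧)+1) * X^(k'+1) * U.derivativeFun) * hUk1
    rw [hDWk, coeff_C_mul, map_add (coeff (R := ℚ⟦X⟧) d)]
    have h1 : coeff (R := ℚ⟦X⟧) d (X^k' * V^m) = coeff (R := ℚ⟦X⟧) m (V^m) := by
      rw [hdm, coeff_X_pow_mul]
    by_cases hcase : k' + 1 = n
    · have hm0 : m = 0 := by omega
      have h2 : coeff (R := ℚ⟦X⟧) d (X^(k'+1) * (U.derivativeFun * V^(m+1))) = 0 := by
        rw [coeff_X_pow_mul', if_neg (by omega)]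
      rw [h1, h2, hm0, pow_zero, add_zero, if_pos hcase]
      have h3 : ((k' : ℚ⟦X⟧)+1) = (n : ℚ⟦X⟧) := by
        rw [← hcase]; push_cast; ring
      simp [h3]
    · obtain ⟨m', hmm'⟩ : ∃ m', m = m' + 1 := ⟨m - 1, by omega⟩
      rw [hmm'] at h1 ⊢
      have h2 : coeff (R := ℚ⟦X⟧) d (X^(k'+1) * (U.derivativeFun * V^(m'+1+1)))
          = coeff (R := ℚ⟦X⟧) m' (U.derivativeFun * V^(m'+2)) := by
        rw [show d = m' + (k'+1) by omega, coeff_X_pow_mul]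
      have h3 : U.derivativeFun * V^(m'+2) = -(V.derivativeFun * V^(m')) := by
        linear_combination (V^(m'+1)) * hDUV - (V.derivativeFun * V^(m')) * hUV
      have hne : ((m' : ℚ⟦X⟧)+1) ≠ 0 := by
        intro hc
        have h7 := congrArg (constantCoeff (R := ℚ)) hc
        rw [map_add, map_natCast, map_one, map_zero] at h7
        exact (Nat.cast_add_one_ne_zero m') h7
      have h4 : coeff (R := ℚ⟦X⟧) m' (V.derivativeFun * V^(m'))
          = coeff (R := ℚ⟦X⟧) (m'+1) (V^(m'+1)) := by
        have h5 := congrArg (coeff (R := ℚ⟦X⟧) m') (deriv_pow_succ V m')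
        rw [coeff_dFun,
          show ((m' : (ℚ⟦X⟧)⟦X⟧)+1) = C (R := ℚ⟦X⟧) ((m' : ℚ⟦X⟧)+1) by
            rw [map_add, map_natCast, map_one],
          coeff_C_mul] at h5
        rw [show V^m' * V.derivativeFun = V.derivativeFun * V^m' from mul_comm _ _] at h5
        push_cast at h5
        apply mul_left_cancel₀ hne
        linear_combination -h5
      rw [h1, h2, h3, map_neg, h4, if_neg hcase]
      ring
  -- Gmap is the derivative of Hmap
  have hGD : Hmap.derivativeFun = Gmap := by
    ext j
    rw [coeff_dFun, hHmapdef, hGmapdef, coeff_map, coeff_map, ← hH,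
      coeff_dFun, map_mul (C (R := ℚ))]
    congr 1
    simp
  -- the error term
  set E := Hmap - ∑ k ∈ range (n+1), C (R := ℚ⟦X⟧) (coeff (R := ℚ⟦X⟧) k S) * W ^ k with hEdef
  have hsubW : PowerSeries.substitute Xser W = X := by
    have h1 : PowerSeries.substitute Xser W
        = PowerSeries.substitute Xser X - PowerSeries.substitute Xser (T * Fmap) := by
      rw [hWdef]; exact map_sub (substituteHom Xser hX0) X (T * Fmap)
    have h2 : PowerSeries.substitute Xser (T * Fmap)
        = T * PowerSeries.substitute Xser Fmap := by
      rw [hTdef]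
      have := map_mul (substituteHom Xser hX0) (C (R := ℚ⟦X⟧) X) Fmap
      simp only [substituteHom_apply] at this
      rw [this, substitute_C]
    rw [h1, h2, substitute_X hX0]
    exact hXeq
  have hsubE : ∀ j ≤ n, coeff (R := ℚ⟦X⟧) j (PowerSeries.substitute Xser E) = 0 := by
    have hEs : PowerSeries.substitute Xser E
        = S - ∑ k ∈ range (n+1), C (R := ℚ⟦X⟧) (coeff (R := ℚ⟦X⟧) k S) * X ^ k := by
      rw [hEdef]
      have h3 := map_sub (substituteHom Xser hX0) Hmap
        (∑ k ∈ range (n+1), C (R := ℚ⟦X⟧) (coeff (R := ℚ⟦X⟧) k S) * W ^ k)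
      simp only [substituteHom_apply] at h3
      rw [h3, hSdef]
      congr 1
      have h4 := map_sum (substituteHom Xser hX0)
        (fun k => C (R := ℚ⟦X⟧) (coeff (R := ℚ⟦X⟧) k S) * W ^ k) (range (n+1))
      simp only [map_mul, map_pow, substituteHom_apply, substitute_C, hsubW] at h4
      exact h4
    intro j hj
    rw [hEs, map_sub, map_sum]
    have hterm : ∀ k ∈ range (n+1), coeff (R := ℚ⟦X⟧) j (C (R := ℚ⟦X⟧) (coeff (R := ℚ⟦X⟧) k S) * X ^ k)
        = if k = j then coeff (R := ℚ⟦X⟧) j S else 0 := by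
      intro k hk
      rw [coeff_C_mul, coeff_X_pow]
      by_cases h : k = j
      · subst h; simp
      · simp [h, Ne.symm h]
    rw [Finset.sum_congr rfl hterm, Finset.sum_ite_eq' (range (n+1)) j
      (fun _ => coeff (R := ℚ⟦X⟧) j S), if_pos (mem_range.mpr (by omega)), sub_self]
  have hE0 : ∀ j ≤ n, coeff (R := ℚ⟦X⟧) j E = 0 :=
    vanish_of_substitute_vanish (E := E) hX0 (hX₁def ▸ hu) hsubE
  -- main Lagrange identity
  have hmain : coeff (R := ℚ⟦X⟧) d (Gmap * V ^ n) = (n : ℚ⟦X⟧) * coeff (R := ℚ⟦X⟧) n S := by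
    rw [← hGD]
    have hHsum : Hmap = (∑ k ∈ range (n+1), C (R := ℚ⟦X⟧) (coeff (R := ℚ⟦X⟧) k S) * W ^ k) + E := by
      rw [hEdef]; ring
    rw [hHsum, derivativeFun_add, RiordanAux.deriv_sum, add_mul, Finset.sum_mul,
        map_add (coeff (R := ℚ⟦X⟧) d), map_sum (coeff (R := ℚ⟦X⟧) d)]
    have hterm : ∀ k ∈ range (n+1),
        coeff (R := ℚ⟦X⟧) d ((C (R := ℚ⟦X⟧) (coeff (R := ℚ⟦X⟧) k S) * W ^ k).derivativeFun * V ^ n)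
        = if k = n then (n : ℚ⟦X⟧) * coeff (R := ℚ⟦X⟧) n S else 0 := by
      intro k hk
      have hdC : (C (R := ℚ⟦X⟧) (coeff (R := ℚ⟦X⟧) k S) * W ^ k).derivativeFun
          = C (R := ℚ⟦X⟧) (coeff (R := ℚ⟦X⟧) k S) * ((W^k).derivativeFun) := by
        rw [deriv_mul', dFun_C]
        ring
      rw [hdC, mul_assoc, coeff_C_mul]
      cases k with
      | zero =>
        rw [pow_zero, derivativeFun_one, zero_mul, map_zero, mul_zero, if_neg (by omega)]
      | succ k' =>
        rw [hkey k' (by simpa using hk)]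
        by_cases hck : k' + 1 = n
        · rw [if_pos hck, if_pos hck, hck]; ring
        · rw [if_neg hck, if_neg hck, mul_zero]
    rw [Finset.sum_congr rfl hterm, Finset.sum_ite_eq' (range (n+1)) n
      (fun _ => (n : ℚ⟦X⟧) * coeff (R := ℚ⟦X⟧) n S), if_pos (self_mem_range_succ n)]
    have hEterm : coeff (R := ℚ⟦X⟧) d (E.derivativeFun * V ^ n) = 0 := by
      rw [coeff_mul]
      apply Finset.sum_eq_zero
      intro x hx
      have hx1 : x.1 ≤ d := by
        rw [Finset.HasAntidiagonal.mem_antidiagonal] at hx; omega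
      rw [coeff_dFun, hE0 (x.1+1) (by omega), zero_mul, zero_mul]
    rw [hEterm, add_zero]
  -- final extraction
  rw [hF₁mapdef] at hVrec
  have hVpow := coeffVpow F₁ V hVrec
  have hmp := congrArg (coeff (R := ℚ) p) hmain
  rw [coeff_mul, map_sum] at hmp
  have hterm2 : ∀ x ∈ antidiagonal d,
      coeff (R := ℚ) p (coeff (R := ℚ⟦X⟧) x.1 Gmap * coeff (R := ℚ⟦X⟧) x.2 (V^n))
      = ((p+d).choose d : ℚ) * (coeff (R := ℚ) x.1 G * coeff (R := ℚ) x.2 (F₁^p)) := by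
    intro x hx
    rw [hGmapdef, coeff_map, coeff_C_mul, hn, hVpow d p x.2]
    ring
  rw [Finset.sum_congr rfl hterm2, ← Finset.mul_sum, ← coeff_mul] at hmp
  rw [show ((n:ℚ⟦X⟧)) = C (R := ℚ) ((n:ℚ)) by rw [map_natCast], coeff_C_mul] at hmp
  have hcoeffd : coeff (R := ℚ) d (G * F₁^p) = coeff (R := ℚ) (d+p) (G * F^p) := by
    rw [hFF₁, mul_pow, show G * (F₁^p * X^p) = (G * F₁^p) * X^p by ring, coeff_mul_X_pow]
  have hchoose : ((p+d).choose d) = ((d+p).choose p) := by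
    have h8 := Nat.choose_symm (Nat.le_add_left p d)
    rw [Nat.add_sub_cancel] at h8
    rw [Nat.add_comm p d]
    exact h8
  rw [hchoose, hcoeffd] at hmp
  have hncast : ((n:ℕ):ℚ) = (d:ℚ)+1 := by rw [hn]; push_cast; ring
  rw [hncast] at hmp
  rw [hR, eq_div_iff (show ((d:ℚ)+1) ≠ 0 by positivity)]
  linear_combination -hmp
end

section
/- Let G, F be formal power series over ℚ with G(0) = 1, F(0) = 0 and with the coefficient of x^1 in F nonzero, with Riordan triangle entries R(n,m) := [x^n]( G(x)·F(x)^m ). Work in (ℚ[[t]])[[y]], let X = x(t;y) be the element with zero constant term satisfying X − t·F(X) = y, and let H be the power series over ℚ with H(0) = 0 and formal derivative G. Define D̃(d,m) := (d+m)!·R(d+m,m), its exponential generating function E D̃(d,t) := Σ_{m≥0} D̃(d,m)·t^m/m!, and the double exponential generating function E E D̃(y,t) := Σ_{d≥0} E D̃(d,t)·y^{d+1}/(d+1)!. Then E E D̃(y,t) = H(x(t;y)) − H(0); equivalently, for all d, m ≥ 0 the coefficient of t^m·y^{d+1} in H(x(t;y)) equals (d+m)!·R(d+m,m)/( m!·(d+1)!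 ). -/
open PowerSeries Finset

namespace PowerSeries

variable {R : Type*} [CommRing R]


variable {R : Type*} [CommRing R]

theorem coeff_pow_eq_zero {a : R⟦X⟧} (ha : constantCoeff (R := R) a = 0) {n k : ℕ} (h : n < k) :
    coeff (R := R) n (a ^ k) = 0 := by
  obtain ⟨b, rfl⟩ := X_dvd_iff.mpr ha
  rw [mul_pow, coeff_mul]
  refine Finset.sum_eq_zero fun p hp => ?_
  rw [Finset.HasAntidiagonal.mem_antidiagonal] at hp
  rw [coeff_X_pow, if_neg, zero_mul]
  omega

theorem coeff_substitute (a f : R⟦X⟧) (n : ℕ) :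
    coeff (R := R) n (substitute a f) = ∑ k ∈ range (n + 1), coeff (R := R) k f * coeff (R := R) n (a ^ k) := by
  rw [substitute, coeff_mk]

theorem coeff_substitute' {a : R⟦X⟧} (ha : constantCoeff (R := R) a = 0) (f : R⟦X⟧) {n N : ℕ}
    (hN : n + 1 ≤ N) :
    coeff (R := R) n (substitute a f) = ∑ k ∈ range N, coeff (R := R) k f * coeff (R := R) n (a ^ k) := by
  rw [coeff_substitute]
  refine Finset.sum_subset (Finset.range_subset_range.2 hN) fun k _ hk => ?_
  rw [Finset.mem_range, not_lt] at hk
  rw [coeff_pow_eq_zero ha (by omega), mul_zero]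

theorem coeff_pow_mul_eq_zero {a : R⟦X⟧} (ha : constantCoeff (R := R) a = 0) (b : R⟦X⟧) {n k : ℕ}
    (h : n < k) : coeff (R := R) n (a ^ k * b) = 0 := by
  rw [coeff_mul]
  refine Finset.sum_eq_zero fun p hp => ?_
  rw [Finset.HasAntidiagonal.mem_antidiagonal] at hp
  rw [coeff_pow_eq_zero ha (by omega), zero_mul]

theorem coeff_substitute_mul {a : R⟦X⟧} (ha : constantCoeff (R := R) a = 0) (f b : R⟦X⟧) {n N : ℕ}
    (hN : n + 1 ≤ N) :
    coeff (R := R) n (substitute a f * b) = ∑ k ∈ range N, coeff (R := R) k f * coeff (R := R) n (a ^ k * b) := by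
  rw [coeff_mul]
  have : ∀ p ∈ antidiagonal n, coeff (R := R) p.1 (substitute a f) * coeff (R := R) p.2 b
      = ∑ k ∈ range N, coeff (R := R) k f * (coeff (R := R) p.1 (a ^ k) * coeff (R := R) p.2 b) := by
    intro p hp
    rw [Finset.HasAntidiagonal.mem_antidiagonal] at hp
    rw [coeff_substitute' ha f (N := N) (by omega), Finset.sum_mul]
    exact Finset.sum_congr rfl fun k _ => by ring
  rw [Finset.sum_congr rfl this, Finset.sum_comm]
  refine Finset.sum_congr rfl fun k _ => ?_
  rw [← Finset.mul_sum, coeff_mul]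




theorem sum_triangle_eq_sum_square (n : ℕ) (h : ℕ → ℕ → R) (hz : ∀ i j, n < i + j → h i j = 0) :
    ∑ k ∈ range (n+1), ∑ p ∈ antidiagonal k, h p.1 p.2
      = ∑ i ∈ range (n+1), ∑ j ∈ range (n+1), h i j := by
  have hbi : (range (n+1)).biUnion Finset.HasAntidiagonal.antidiagonal
      = (range (n+1) ×ˢ range (n+1)).filter (fun p => p.1 + p.2 ≤ n) := by
    ext ⟨i, j⟩
    simp only [Finset.mem_biUnion, Finset.mem_range, Finset.HasAntidiagonal.mem_antidiagonal,
      Finset.mem_filter, Finset.mem_product]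
    constructor
    · rintro ⟨k, hk, rfl⟩; omega
    · rintro ⟨⟨hi, hj⟩, hij⟩; exact ⟨i + j, by omega, rfl⟩
  have hdisj : ((range (n+1) : Finset ℕ) : Set ℕ).PairwiseDisjoint Finset.HasAntidiagonal.antidiagonal := by
    intro x _ y _ hxy
    simp only [Finset.disjoint_left, Finset.HasAntidiagonal.mem_antidiagonal]
    rintro p rfl h; exact hxy h
  rw [← Finset.sum_biUnion hdisj, hbi, Finset.sum_filter_of_ne, Finset.sum_product]
  intro p _ hp
  by_contra hc
  exact hp (hz p.1 p.2 (by omega))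

theorem substitute_mul {a : R⟦X⟧} (ha : constantCoeff (R := R) a = 0) (f g : R⟦X⟧) :
    substitute a (f * g) = substitute a f * substitute a g := by
  ext n
  rw [coeff_substitute_mul ha f (substitute a g) (le_refl (n+1))]
  have h1 : ∀ k ∈ range (n+1), coeff (R := R) k f * coeff (R := R) n (a ^ k * substitute a g)
      = ∑ j ∈ range (n+1), coeff (R := R) k f * (coeff (R := R) j g * coeff (R := R) n (a ^ k * a ^ j)) := by
    intro k _
    rw [mul_comm (a ^ k), coeff_substitute_mul ha g (a ^ k) (le_refl (n+1)), Finset.mul_sum]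
    exact Finset.sum_congr rfl fun j _ => by rw [mul_comm (a ^ j)]
  rw [Finset.sum_congr rfl h1, coeff_substitute]
  have h2 : ∀ k ∈ range (n+1), coeff (R := R) k (f * g) * coeff (R := R) n (a ^ k)
      = ∑ p ∈ antidiagonal k, coeff (R := R) p.1 f * coeff (R := R) p.2 g * coeff (R := R) n (a ^ (p.1 + p.2)) := by
    intro k hk
    rw [coeff_mul, Finset.sum_mul]
    refine Finset.sum_congr rfl fun p hp => ?_
    rw [Finset.HasAntidiagonal.mem_antidiagonal] at hp
    rw [hp]
  rw [Finset.sum_congr rfl h2,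
    sum_triangle_eq_sum_square n (fun i j => coeff (R := R) i f * coeff (R := R) j g * coeff (R := R) n (a ^ (i+j)))
      (fun i j hij => by rw [coeff_pow_eq_zero ha hij, mul_zero])]
  refine Finset.sum_congr rfl fun i _ => Finset.sum_congr rfl fun j _ => ?_
  rw [← pow_add]
  ring

@[simp] theorem substitute_C (a : R⟦X⟧) (r : R) : substitute a (C (R := R) r) = C (R := R) r := by
  ext n
  rw [coeff_substitute]
  have : ∀ k ∈ range (n+1), coeff (R := R) k (C (R := R) r) * coeff (R := R) n (a ^ k)
      = if k = 0 then (if n = 0 then r else 0) else 0 := by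
    intro k _
    rw [coeff_C]
    by_cases h : k = 0
    · subst h; rw [if_pos rfl, if_pos rfl, pow_zero, coeff_one, mul_ite, mul_one, mul_zero]
    · rw [if_neg h, if_neg h, zero_mul]
  rw [Finset.sum_congr rfl this, Finset.sum_ite_eq' (range (n+1)) 0, if_pos (by simp), coeff_C]

@[simp] theorem substitute_one (a : R⟦X⟧) : substitute a 1 = 1 := by
  rw [← map_one (C (R := R)), substitute_C]

theorem substitute_X_right {a : R⟦X⟧} (ha : constantCoeff (R := R) a = 0) : substitute a X = a := by
  ext n
  rw [coeff_substitute' ha X (N := n + 2) (by omega)]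
  have : ∀ k ∈ range (n+2), coeff (R := R) k (X : R⟦X⟧) * coeff (R := R) n (a ^ k)
      = if k = 1 then coeff (R := R) n a else 0 := by
    intro k _
    rw [coeff_X]
    split_ifs with h
    · rw [h, one_mul, pow_one]
    · rw [zero_mul]
  rw [Finset.sum_congr rfl this, Finset.sum_ite_eq' (range (n+2)) 1 (fun _ => coeff (R := R) n a),
    if_pos (by simp)]

theorem substitute_X_left (f : R⟦X⟧) : substitute X f = f := by
  ext n
  rw [coeff_substitute]
  have : ∀ k ∈ range (n+1), coeff (R := R) k f * coeff (R := R) n ((X : R⟦X⟧) ^ k)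
      = if k = n then coeff (R := R) n f else 0 := by
    intro k _
    rw [coeff_X_pow]
    split_ifs with h1 h2 h3
    · rw [h2, mul_one]
    · exact absurd h1.symm h2
    · exact absurd h3.symm h1
    · rw [mul_zero]
  rw [Finset.sum_congr rfl this, Finset.sum_ite_eq' (range (n+1)) n (fun _ => coeff (R := R) n f),
    if_pos (by simp)]

theorem substitute_add (a f g : R⟦X⟧) :
    substitute a (f + g) = substitute a f + substitute a g := by
  ext n
  simp only [coeff_substitute, map_add, ← Finset.sum_add_distrib, add_mul]

theorem substitute_pow {a : R⟦X⟧} (ha : constantCoeff (R := R) a = 0) (f : R⟦X⟧) (k : ℕ) :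
    substitute a (f ^ k) = substitute a f ^ k := by
  induction k with
  | zero => simp
  | succ k ih => rw [pow_succ, pow_succ, substitute_mul ha, ih]

theorem constantCoeff_substitute {a : R⟦X⟧} (ha : constantCoeff (R := R) a = 0) (f : R⟦X⟧) :
    constantCoeff (R := R) (substitute a f) = constantCoeff (R := R) f := by
  rw [← coeff_zero_eq_constantCoeff_apply, ← coeff_zero_eq_constantCoeff_apply,
    coeff_substitute]
  simp

theorem map_substitute {S : Type*} [CommRing S] (φ : R →+* S) (a f : R⟦X⟧) :
    map φ (substitute a f) = substitute (map φ a) (map φ f) := by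
  ext n
  rw [coeff_map, coeff_substitute, coeff_substitute, map_sum]
  refine Finset.sum_congr rfl fun k _ => ?_
  rw [map_mul]
  simp only [← map_pow, coeff_map]




theorem coeff_derivativeFun' (f : R⟦X⟧) (n : ℕ) :
    coeff n (derivativeFun f) = coeff (n + 1) f * (n + 1) := coeff_derivative f n

theorem derivativeFun_C' {r : R} : derivativeFun (C r) = 0 := derivative_C

theorem derivativeFun_zero' : derivativeFun (0 : R⟦X⟧) = 0 := by
  ext n; rw [coeff_derivativeFun']; simp

theorem derivativeFun_sum {ι : Type*} (s : Finset ι) (f : ι → R⟦X⟧) :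
    derivativeFun (∑ i ∈ s, f i) = ∑ i ∈ s, derivativeFun (f i) := by
  classical
  induction s using Finset.induction_on with
  | empty => simp [derivativeFun_zero']
  | insert _ _ h ih => rw [Finset.sum_insert h, Finset.sum_insert h, derivativeFun_add, ih]

theorem derivativeFun_pow' (a : R⟦X⟧) (k : ℕ) :
    derivativeFun (a ^ (k + 1)) = (k + 1) • (a ^ k * derivativeFun a) := by
  induction k with
  | zero => simp
  | succ k ih =>
    rw [pow_succ, derivativeFun_mul, ih, smul_eq_mul, smul_eq_mul]
    simp only [succ_nsmul, smul_mul_assoc, nsmul_eq_mul]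
    push_cast
    ring

theorem map_derivativeFun {S : Type*} [CommRing S] (φ : R →+* S) (f : R⟦X⟧) :
    map φ (derivativeFun f) = derivativeFun (map φ f) := by
  ext n
  rw [coeff_map, coeff_derivativeFun', coeff_derivativeFun', coeff_map, map_mul, map_add, map_natCast, map_one]




/-- Chain rule for the outer derivative. -/
theorem derivativeFun_substitute {a : R⟦X⟧} (ha : constantCoeff (R := R) a = 0) (f : R⟦X⟧) :
    derivativeFun (substitute a f)
      = substitute a (derivativeFun f) * derivativeFun a := by
  ext n
  rw [coeff_derivativeFun', coeff_substitute' ha f (N := n + 3) (by omega), Finset.sum_mul,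
    coeff_substitute_mul ha (derivativeFun f) (derivativeFun a) (N := n + 2) (by omega)]
  rw [Finset.sum_range_succ' (fun k => coeff (R := R) k f * coeff (R := R) (n+1) (a ^ k) * ((n : R) + 1))]
  have h0 : coeff (R := R) 0 f * coeff (R := R) (n+1) (a ^ 0) * ((n : R) + 1) = 0 := by
    rw [pow_zero, coeff_one, if_neg (Nat.succ_ne_zero n), mul_zero, zero_mul]
  rw [h0, add_zero]
  apply Finset.sum_congr rfl
  intro j _
  have hpow : coeff (R := R) n (derivativeFun (a ^ (j + 1)))
      = ((j : R) + 1) * coeff (R := R) n (a ^ j * derivativeFun a) := by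
    rw [derivativeFun_pow', map_nsmul, nsmul_eq_mul]
    push_cast
    ring
  calc coeff (R := R) (j+1) f * coeff (R := R) (n+1) (a ^ (j+1)) * ((n : R) + 1)
      = coeff (R := R) (j+1) f * (coeff (R := R) (n+1) (a ^ (j+1)) * ((n : R)+1)) := by ring
    _ = coeff (R := R) (j+1) f * coeff (R := R) n (derivativeFun (a ^ (j+1))) := by
        rw [coeff_derivativeFun']
    _ = coeff (R := R) j (derivativeFun f) * coeff (R := R) n (a ^ j * derivativeFun a) := by
        rw [hpow, coeff_derivativeFun']; ring

/-- Coefficient-wise derivative (derivative "in the inner variable `t`"). -/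
noncomputable def Dt (A : (R⟦X⟧)⟦X⟧) : (R⟦X⟧)⟦X⟧ :=
  mk fun n => derivativeFun (coeff (R := R⟦X⟧) n A)

theorem coeff_Dt (A : (R⟦X⟧)⟦X⟧) (n : ℕ) :
    coeff (R := R⟦X⟧) n (Dt A) = derivativeFun (coeff (R := R⟦X⟧) n A) := coeff_mk _ _

theorem Dt_add (A B : (R⟦X⟧)⟦X⟧) : Dt (A + B) = Dt A + Dt B := by
  ext n; rw [coeff_Dt, map_add, map_add, derivativeFun_add, coeff_Dt, coeff_Dt]

theorem Dt_mul (A B : (R⟦X⟧)⟦X⟧) : Dt (A * B) = Dt A * B + A * Dt B := by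
  refine PowerSeries.ext fun n => ?_
  rw [coeff_Dt]
  rw [coeff_mul n A B]
  rw [derivativeFun_sum]
  rw [map_add]
  rw [coeff_mul n]
  rw [coeff_mul n]
  rw [← Finset.sum_add_distrib (s := Finset.HasAntidiagonal.antidiagonal n)]
  apply Finset.sum_congr rfl
  intro p _
  rw [derivativeFun_mul, coeff_Dt, coeff_Dt, smul_eq_mul, smul_eq_mul]
  ring

theorem Dt_C (c : R⟦X⟧) : Dt (C (R := R⟦X⟧) c) = C (R := R⟦X⟧) (derivativeFun c) := by
  ext n
  rw [coeff_Dt, coeff_C]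
  by_cases h : n = 0
  · rw [if_pos h, coeff_C, if_pos h]
  · rw [if_neg h, coeff_C, if_neg h, derivativeFun_zero']

theorem Dt_one : Dt (1 : (R⟦X⟧)⟦X⟧) = 0 := by
  rw [← map_one (C (R := R⟦X⟧)), Dt_C, derivativeFun_one, map_zero]

theorem Dt_X : Dt (X : (R⟦X⟧)⟦X⟧) = 0 := by
  ext n
  rw [coeff_Dt, coeff_X]
  split_ifs
  · rw [derivativeFun_one]; simp
  · rw [derivativeFun_zero']; simp

theorem Dt_pow (a : (R⟦X⟧)⟦X⟧) (k : ℕ) :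
    Dt (a ^ (k + 1)) = (k + 1) • (a ^ k * Dt a) := by
  induction k with
  | zero => simp [pow_one, pow_zero, one_mul, Dt_mul, Dt_one]
  | succ k ih =>
    rw [pow_succ, Dt_mul, ih]
    simp only [succ_nsmul, smul_mul_assoc, nsmul_eq_mul]
    push_cast
    ring

/-- Chain rule for the inner (`t`-)derivative, for `f` with `t`-constant coefficients. -/
theorem Dt_substitute {a f : (R⟦X⟧)⟦X⟧} (ha : constantCoeff (R := R⟦X⟧) a = 0)
    (hf : ∀ k, derivativeFun (coeff (R := R⟦X⟧) k f) = 0) :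
    Dt (substitute a f) = substitute a (derivativeFun f) * Dt a := by
  refine PowerSeries.ext fun n => ?_
  rw [coeff_Dt]
  rw [coeff_substitute' ha f (N := n + 2) (by omega)]
  rw [derivativeFun_sum]
  rw [coeff_substitute_mul ha (derivativeFun f) (Dt a) (N := n + 1) (le_refl _)]
  rw [Finset.sum_range_succ' (fun k => derivativeFun (coeff (R := R⟦X⟧) k f * coeff (R := R⟦X⟧) n (a ^ k)))]
  have h0 : derivativeFun (coeff (R := R⟦X⟧) 0 f * coeff (R := R⟦X⟧) n (a ^ 0)) = 0 := by
    rw [derivativeFun_mul, hf 0, pow_zero, coeff_one]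
    split_ifs
    · rw [derivativeFun_one, smul_zero, smul_zero, add_zero]
    · rw [derivativeFun_zero', smul_zero, smul_zero, add_zero]
  rw [h0, add_zero]
  apply Finset.sum_congr rfl
  intro j _
  rw [derivativeFun_mul, hf (j+1), smul_zero, add_zero, smul_eq_mul]
  have hD : derivativeFun (coeff (R := R⟦X⟧) n (a ^ (j + 1))) = coeff (R := R⟦X⟧) n (Dt (a ^ (j+1))) :=
    (coeff_Dt _ _).symm
  rw [hD, Dt_pow, map_nsmul, nsmul_eq_mul, coeff_derivativeFun']
  push_cast
  ring


theorem derivativeFun_X' : derivativeFun (X : R⟦X⟧) = 1 := by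
  ext n
  rw [coeff_derivativeFun', coeff_one, coeff_X]
  by_cases h : n = 0
  · subst h; norm_num
  · rw [if_neg (by omega), if_neg h, zero_mul]

theorem map_map' {S T : Type*} [CommRing S] [CommRing T] (φ : R →+* S) (ψ : S →+* T)
    (f : R⟦X⟧) : map ψ (map φ f) = map (ψ.comp φ) f := by
  ext n
  rw [coeff_map, coeff_map, coeff_map, RingHom.comp_apply]

end PowerSeries

/-- **Double e.g.f. for diagonals of a Riordan triangle.**  Let `R = (G, F)` be a
Riordan triangle, with entries `R(n,m) = [x^n](G·F^m)`.  Let `X = x(t;y)` be the series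
in `(ℚ[[t]])[[y]]` with zero constant term satisfying `X − t·F(X) = y`, and let `H` be
the antiderivative of `G` with `H(0) = 0`.  With `D̃(d,m) = (d+m)!·R(d+m,m)`, the double
exponential generating function `EED̃(y,t) = Σ_d (Σ_m D̃(d,m)·t^m/m!)·y^(d+1)/(d+1)!`
equals `H(x(t;y)) − H(0)`; i.e. the coefficient of `t^m·y^(d+1)` in `H(x(t;y))` is
`(d+m)!·R(d+m,m)/(m!·(d+1)!)`. -/
theorem riordan_diagonal_double_egf (G F : ℚ⟦X⟧)
    (hG : constantCoeff (R := ℚ) G = 1) (hF0 : constantCoeff (R := ℚ) F = 0) (hF1 : coeff (R := ℚ) 1 F ≠ 0)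
    (R : ℕ → ℕ → ℚ)
    (hR : ∀ n m : ℕ, R n m = coeff (R := ℚ) n (G * F ^ m))
    (H : ℚ⟦X⟧) (hH0 : constantCoeff (R := ℚ) H = 0) (hH : H.derivativeFun = G)
    (Xser : (ℚ⟦X⟧)⟦X⟧)
    (hX0 : constantCoeff (R := ℚ⟦X⟧) Xser = 0)
    (hXeq : Xser - PowerSeries.C (R := ℚ⟦X⟧) PowerSeries.X *
        PowerSeries.substitute Xser (PowerSeries.map (PowerSeries.C (R := ℚ)) F)
      = PowerSeries.X) :
    ∀ d m : ℕ,
      coeff (R := ℚ) m (coeff (R := ℚ⟦X⟧) (d + 1)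
          (PowerSeries.substitute Xser (PowerSeries.map (PowerSeries.C (R := ℚ)) H)))
        = ((d + m).factorial : ℚ) * R (d + m) m
            / ((m.factorial : ℚ) * (d + 1).factorial) := by
  classical
  -- the antiderivatives of `G * F ^ j`
  set Hs : ℕ → ℚ⟦X⟧ := fun j => PowerSeries.mk fun n =>
    coeff (R := ℚ) (n-1) (G * F ^ j) * (n : ℚ)⁻¹ with hHs
  have hHscoeff : ∀ j n, coeff (R := ℚ) n (Hs j) = coeff (R := ℚ) (n-1) (G * F ^ j) * (n : ℚ)⁻¹ := by
    intro j n
    simp only [hHs, coeff_mk]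
  have hHsD : ∀ j, derivativeFun (Hs j) = G * F ^ j := by
    intro j
    ext n
    rw [coeff_derivativeFun', hHscoeff, Nat.add_sub_cancel]
    have h1 : (((n:ℕ)+1 : ℕ) : ℚ) ≠ 0 := by positivity
    push_cast
    field_simp
  have hHmain : H = Hs 0 := by
    ext n
    cases n with
    | zero =>
      rw [coeff_zero_eq_constantCoeff_apply, hH0, hHscoeff]
      norm_num
    | succ n =>
      have h1 : coeff (R := ℚ) n (derivativeFun H) = coeff (R := ℚ) n G := by rw [hH]
      rw [coeff_derivativeFun'] at h1
      rw [hHscoeff, Nat.add_sub_cancel, pow_zero, mul_one]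
      have h2 : ((n : ℚ) + 1) ≠ 0 := by positivity
      push_cast
      field_simp
      linarith [h1]
  -- shorthand
  have hsub_mul : ∀ f g : ℚ⟦X⟧,
      PowerSeries.substitute Xser (PowerSeries.map (PowerSeries.C (R := ℚ)) (f * g))
        = PowerSeries.substitute Xser (PowerSeries.map (PowerSeries.C (R := ℚ)) f)
          * PowerSeries.substitute Xser (PowerSeries.map (PowerSeries.C (R := ℚ)) g) := by
    intro f g
    rw [map_mul, substitute_mul hX0]
  have hconst : ∀ f : ℚ⟦X⟧, ∀ k,
      derivativeFun (coeff (R := ℚ⟦X⟧) k (PowerSeries.map (PowerSeries.C (R := ℚ)) f)) = 0 := by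
    intro f k
    rw [coeff_map, derivativeFun_C']
  -- the functional equation
  have hX : Xser = PowerSeries.X + PowerSeries.C (R := ℚ⟦X⟧) PowerSeries.X *
      PowerSeries.substitute Xser (PowerSeries.map (PowerSeries.C (R := ℚ)) F) := by
    rw [← hXeq]
    ring
  -- derivative in y
  have hDy : derivativeFun Xser
      = 1 + PowerSeries.C (R := ℚ⟦X⟧) PowerSeries.X
          * (PowerSeries.substitute Xser (PowerSeries.map (PowerSeries.C (R := ℚ)) F.derivativeFun)
              * derivativeFun Xser) := by
    conv_lhs => rw [hX]
    rw [derivativeFun_add, derivativeFun_X', derivativeFun_mul, derivativeFun_C', smul_zero,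
      add_zero, smul_eq_mul, derivativeFun_substitute hX0, ← map_derivativeFun]
  -- derivative in t
  have hDt : Dt Xser
      = PowerSeries.substitute Xser (PowerSeries.map (PowerSeries.C (R := ℚ)) F)
        + PowerSeries.C (R := ℚ⟦X⟧) PowerSeries.X
          * (PowerSeries.substitute Xser (PowerSeries.map (PowerSeries.C (R := ℚ)) F.derivativeFun)
              * Dt Xser) := by
    conv_lhs => rw [hX]
    rw [Dt_add, Dt_X, Dt_mul, Dt_C, derivativeFun_X', map_one, one_mul, zero_add,
      Dt_substitute hX0 (hconst F), ← map_derivativeFun]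
  -- the unit
  have hunit : IsUnit (1 - PowerSeries.C (R := ℚ⟦X⟧) PowerSeries.X *
      PowerSeries.substitute Xser (PowerSeries.map (PowerSeries.C (R := ℚ)) F.derivativeFun)) := by
    rw [PowerSeries.isUnit_iff_constantCoeff, map_sub, map_one, map_mul,
      PowerSeries.constantCoeff_C, constantCoeff_substitute hX0,
      PowerSeries.isUnit_iff_constantCoeff, map_sub, map_one, map_mul,
      PowerSeries.constantCoeff_X, zero_mul, sub_zero]
    exact isUnit_one
  -- Dt X = F(X) * Dy X
  have hDtDy : Dt Xser
      = PowerSeries.substitute Xser (PowerSeries.map (PowerSeries.C (R := ℚ)) F)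
          * derivativeFun Xser := by
    have eA : (1 - PowerSeries.C (R := ℚ⟦X⟧) PowerSeries.X *
          PowerSeries.substitute Xser (PowerSeries.map (PowerSeries.C (R := ℚ)) F.derivativeFun))
        * Dt Xser
        = PowerSeries.substitute Xser (PowerSeries.map (PowerSeries.C (R := ℚ)) F) := by
      linear_combination hDt
    have eB : (1 - PowerSeries.C (R := ℚ⟦X⟧) PowerSeries.X *
          PowerSeries.substitute Xser (PowerSeries.map (PowerSeries.C (R := ℚ)) F.derivativeFun))
        * (PowerSeries.substitute Xser (PowerSeries.map (PowerSeries.C (R := ℚ)) F)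
            * derivativeFun Xser)
        = PowerSeries.substitute Xser (PowerSeries.map (PowerSeries.C (R := ℚ)) F) := by
      linear_combination (PowerSeries.substitute Xser (PowerSeries.map (PowerSeries.C (R := ℚ)) F)) * hDy
    exact hunit.mul_left_cancel (eA.trans eB.symm)
  -- the key differential relation
  have hchain : ∀ j : ℕ,
      Dt (PowerSeries.substitute Xser (PowerSeries.map (PowerSeries.C (R := ℚ)) (Hs j)))
        = derivativeFun
            (PowerSeries.substitute Xser (PowerSeries.map (PowerSeries.C (R := ℚ)) (Hs (j+1)))) := by
    intro j
    have l1 : Dt (PowerSeries.substitute Xser (PowerSeries.map (PowerSeries.C (R := ℚ)) (Hs j)))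
        = PowerSeries.substitute Xser (PowerSeries.map (PowerSeries.C (R := ℚ)) (G * F ^ j))
            * Dt Xser := by
      rw [Dt_substitute hX0 (hconst (Hs j)), ← map_derivativeFun, hHsD j]
    have l2 : derivativeFun
          (PowerSeries.substitute Xser (PowerSeries.map (PowerSeries.C (R := ℚ)) (Hs (j+1))))
        = PowerSeries.substitute Xser (PowerSeries.map (PowerSeries.C (R := ℚ)) (G * F ^ j))
            * PowerSeries.substitute Xser (PowerSeries.map (PowerSeries.C (R := ℚ)) F)
            * derivativeFun Xser := by
      rw [derivativeFun_substitute hX0, ← map_derivativeFun, hHsD (j+1), pow_succ, ← mul_assoc,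
        hsub_mul]
    rw [l1, l2]
    linear_combination
      (PowerSeries.substitute Xser (PowerSeries.map (PowerSeries.C (R := ℚ)) (G * F ^ j))) * hDtDy
  -- coefficients
  set c : ℕ → ℕ → ℕ → ℚ := fun j n k => coeff (R := ℚ) k (coeff (R := ℚ⟦X⟧) n
    (PowerSeries.substitute Xser (PowerSeries.map (PowerSeries.C (R := ℚ)) (Hs j)))) with hc
  have hrec : ∀ j n k : ℕ,
      c j n (k+1) * ((k : ℚ) + 1) = c (j+1) (n+1) k * ((n : ℚ) + 1) := by
    intro j n k
    have h := congrArg (fun A => coeff (R := ℚ) k (coeff (R := ℚ⟦X⟧) n A)) (hchain j)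
    rw [coeff_Dt, coeff_derivativeFun', coeff_derivativeFun'] at h
    simp only [hc]
    rw [h]
    have hcast : ((n : ℚ⟦X⟧) + 1) = PowerSeries.C (R := ℚ) ((n : ℚ) + 1) := by
      rw [map_add, map_one, map_natCast]
    rw [hcast, coeff_mul_C]
  have hbase : ∀ j n : ℕ, c j n 0 = coeff (R := ℚ) n (Hs j) := by
    intro j n
    have hφC : (constantCoeff (R := ℚ)).comp (PowerSeries.C (R := ℚ)) = RingHom.id ℚ := by
      ext r
      simp
    have hmapX : PowerSeries.map (constantCoeff (R := ℚ)) Xser = PowerSeries.X := by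
      rw [hX, map_add, PowerSeries.map_X, map_mul, PowerSeries.map_C,
        PowerSeries.constantCoeff_X, map_zero, zero_mul, add_zero]
    simp only [hc]
    rw [coeff_zero_eq_constantCoeff_apply, ← PowerSeries.coeff_map, map_substitute, hmapX,
      map_map', hφC, PowerSeries.map_id, id_eq, substitute_X_left]
  -- the closed formula, by induction on k
  have hformula : ∀ k j n : ℕ, c j (n+1) k
      = (((n+1+k).choose k : ℕ) : ℚ) * coeff (R := ℚ) (n+k) (G * F ^ (j+k)) / ((n : ℚ) + 1 + k) := by
    intro k
    induction k with
    | zero =>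
      intro j n
      rw [hbase j (n+1), hHscoeff, Nat.add_sub_cancel]
      simp only [Nat.add_zero, Nat.choose_zero_right, Nat.cast_one, Nat.cast_zero, add_zero,
        one_mul]
      push_cast
      rw [div_eq_mul_inv]
    | succ k ih =>
      intro j n
      have h1 := hrec j (n+1) k
      have h2 := ih (j+1) (n+1)
      have hidx1 : n + 1 + 1 = n + 2 := by omega
      have hidx2 : n + 1 + k = n + (k+1) := by omega
      have hidx3 : j + 1 + k = j + (k+1) := by omega
      have hidx4 : n + 1 + 1 + k = n + k + 2 := by omega
      have hidx5 : n + 1 + (k+1) = n + k + 2 := by omega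
      rw [hidx1] at h1
      rw [hidx1, hidx2, hidx3, hidx4] at h2
      rw [h2] at h1
      rw [hidx5]
      set A := coeff (R := ℚ) (n+(k+1)) (G * F ^ (j+(k+1))) with hA
      have hk1 : ((k : ℚ) + 1) ≠ 0 := by positivity
      have hd2 : ((n : ℚ) + (k:ℚ) + 2) ≠ 0 := by positivity
      have hchoose : (((n+k+2).choose (k+1) : ℕ) : ℚ) * ((k : ℚ)+1)
          = (((n+k+2).choose k : ℕ) : ℚ) * ((n : ℚ)+2) := by
        have h3 := Nat.choose_succ_right_eq (n+k+2) k
        have h4 : (n+k+2) - k = n + 2 := by omega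
        rw [h4] at h3
        exact_mod_cast congrArg (Nat.cast : ℕ → ℚ) h3
      have hx : c j (n+1) (k+1) * (((k:ℚ)+1) * ((n:ℚ)+(k:ℚ)+2))
          = (((n+k+2).choose k : ℕ) : ℚ) * A * ((n:ℚ)+2) := by
        push_cast at h1 ⊢
        field_simp at h1
        linarith [h1]
      rw [eq_div_iff (by push_cast; linarith [hd2] : ((n:ℚ) + 1 + ((k:ℕ)+1 : ℕ)) ≠ 0)]
      push_cast at hx hchoose ⊢
      have hgoal2 : c j (n+1) (k+1) * (((n:ℚ)+(k:ℚ)+2) * ((k:ℚ)+1))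
          = (((n+k+2).choose (k+1) : ℕ) : ℚ) * A * ((k:ℚ)+1) := by
        push_cast
        linear_combination hx - A * hchoose
      have hgoal3 : c j (n+1) (k+1) * (((n:ℚ)+(k:ℚ)+2))
          = (((n+k+2).choose (k+1) : ℕ) : ℚ) * A := by
        have := mul_right_cancel₀ hk1 (by linear_combination hgoal2 :
          (c j (n+1) (k+1) * ((n:ℚ)+(k:ℚ)+2)) * ((k:ℚ)+1)
            = ((((n+k+2).choose (k+1) : ℕ) : ℚ) * A) * ((k:ℚ)+1))
        exact this
      push_cast at hgoal3
      linear_combination hgoal3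
  -- conclusion
  intro d m
  have hgoal := hformula m 0 d
  rw [Nat.zero_add] at hgoal
  rw [hHmain]
  have hcc : coeff (R := ℚ) m (coeff (R := ℚ⟦X⟧) (d + 1)
      (PowerSeries.substitute Xser (PowerSeries.map (PowerSeries.C (R := ℚ)) (Hs 0)))) = c 0 (d+1) m := by
    simp only [hc]
  rw [hcc, hgoal, hR]
  have hfact : ((d+1+m).choose m : ℕ) * m.factorial * (d+1).factorial = (d+1+m).factorial := by
    have := Nat.choose_mul_factorial_mul_factorial (show m ≤ d+1+m by omega)
    have h5 : d + 1 + m - m = d + 1 := by omega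
    rw [h5] at this
    exact this
  have hfact2 : (d+1+m).factorial = (d+m).factorial * (d+m+1) := by
    have h6 : d + 1 + m = (d+m) + 1 := by omega
    rw [h6, Nat.factorial_succ]
    ring
  have hm : (m.factorial : ℚ) ≠ 0 := Nat.cast_ne_zero.2 (Nat.factorial_ne_zero m)
  have hd1 : ((d+1).factorial : ℚ) ≠ 0 := Nat.cast_ne_zero.2 (Nat.factorial_ne_zero (d+1))
  have hdm : ((d:ℚ) + 1 + m) ≠ 0 := by positivity
  have hcastf : (((d+1+m).choose m : ℕ) : ℚ) * (m.factorial : ℚ) * ((d+1).factorial : ℚ)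
      = ((d+m).factorial : ℚ) * ((d:ℚ)+(m:ℚ)+1) := by
    have := congrArg (Nat.cast : ℕ → ℚ) hfact
    push_cast at this
    rw [hfact2] at hfact
    have := congrArg (Nat.cast : ℕ → ℚ) hfact
    push_cast at this
    linarith [this]
  rw [div_eq_div_iff (by push_cast; linarith [hdm]) (by positivity)]
  push_cast
  linear_combination coeff (R := ℚ) (d+m) (G * F ^ m) * hcastf
end
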